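/- Let $G$ be a compact Vilenkin group satisfying Condition (A), let $1 < p \leq 2$, $1/p + 1/q = 1$, and $0 < \alpha \leq 1$. If $f \in Lip_{\mathscr{G}}(\alpha; p)$, then $\Big(\sum_{\langle \xi \rangle_{\mathscr{G}} > |G/G_k|} d_\xi^{q(2/q - 1/2)} \|\widehat{f}(\xi)\|_{HS}^q\Big)^{1/q} = \mathcal{O}(|G/G_k|^{-\alpha})$ as $k \to \infty$. -/

import Mathlib

open MeasureTheory Filter Asymptotics

noncomputable section

/-- The Hilbert–Schmidt (Frobenius) norm of a complex square matrix. -/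
def hsNorm {n : ℕ} (M : Matrix (Fin n) (Fin n) ℂ) : ℝ :=
  Real.sqrt (∑ i, ∑ j, ‖M i j‖ ^ 2)

/-- Irreducibility of a unitary representation, via Schur's commutant criterion. -/
def IsIrreducibleRep {G : Type*} [Group G] {n : ℕ}
    (ξ : G →* Matrix.unitaryGroup (Fin n) ℂ) : Prop :=
  ∀ M : Matrix (Fin n) (Fin n) ℂ,
    (∀ x : G, M * (ξ x : Matrix (Fin n) (Fin n) ℂ) = (ξ x : Matrix (Fin n) (Fin n) ℂ) * M) →
      ∃ c : ℂ, M = c • (1 : Matrix (Fin n) (Fin n) ℂ)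

/-- The Fourier coefficient `f̂(ξ) = ∫_G f(x) ξ(x)* dμ(x)` of `f` at a unitary
representation `ξ`. -/
def fourierCoef {G : Type*} [Group G] [TopologicalSpace G] [MeasurableSpace G]
    (μ : Measure G) (f : G → ℂ) {n : ℕ}
    (ξ : G →* Matrix.unitaryGroup (Fin n) ℂ) : Matrix (Fin n) (Fin n) ℂ :=
  Matrix.of fun i j => ∫ x, f x * (starRingEnd ℂ) ((ξ x : Matrix (Fin n) (Fin n) ℂ) j i) ∂μ

/-- A compact Vilenkin group structure on a profinite group `G`: a strictly decreasing
sequence of open subgroups starting at `G`, forming a neighbourhood basis of the identity,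
with finite indices and `2 ≤ |G_n/G_{n+1}|`. -/
structure VilenkinData (G : Type*) [Group G] [TopologicalSpace G] where
  seq : ℕ → Subgroup G
  top_eq : seq 0 = ⊤
  isOpen : ∀ n, IsOpen (seq n : Set G)
  strictAnti : StrictAnti seq
  basis : (nhds (1 : G)).HasBasis (fun _ : ℕ => True) fun n => (seq n : Set G)
  index_ne_zero : ∀ n, (seq n).index ≠ 0
  two_le_relindex : ∀ n, 2 ≤ (seq (n + 1)).relIndex (seq n)
/-- Data for the unitary dual `Ĝ` of a compact Vilenkin group `G`: a family of pairwise
inequivalent continuous irreducible unitary representations indexed by `ι`, with dimensions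
`dim`, levels `lvl` (so `⟨ξ_i⟩ = |G/G_{lvl i}|`), satisfying the Plancherel identity and the
Peter–Weyl counting identity. -/
structure DualData (G : Type*) [Group G] [TopologicalSpace G] [MeasurableSpace G]
    (V : VilenkinData G) (μ : Measure G) where
  ι : Type
  dim : ι → ℕ
  dim_pos : ∀ i, 0 < dim i
  lvl : ι → ℕ
  rep : ∀ i, G →* Matrix.unitaryGroup (Fin (dim i)) ℂ
  rep_continuous : ∀ i, Continuous fun x => ((rep i) x : Matrix (Fin (dim i)) (Fin (dim i)) ℂ)
  rep_irr : ∀ i, IsIrreducibleRep (rep i)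
  lvl_triv : ∀ i, ∀ x ∈ V.seq (lvl i), rep i x = 1
  lvl_min : ∀ i, 0 < lvl i → ∃ x ∈ V.seq (lvl i - 1), rep i x ≠ 1
  plancherel : ∀ f : G → ℂ, MemLp f 2 μ →
    ∫ x, ‖f x‖ ^ 2 ∂μ = ∑' i, (dim i : ℝ) * hsNorm (fourierCoef μ f (rep i)) ^ 2
  count : ∀ n, HasSum (fun i : {i // lvl i ≤ n} => ((dim i.1 : ℝ)) ^ 2) ((V.seq n).index : ℝ)

section AuxiliaryLemmas

lemma aux_hsNorm_nonneg {n : ℕ} (M : Matrix (Fin n) (Fin n) ℂ) : 0 ≤ hsNorm M :=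
  Real.sqrt_nonneg _

lemma aux_hsNorm_zero {n : ℕ} : hsNorm (0 : Matrix (Fin n) (Fin n) ℂ) = 0 := by
  simp [hsNorm]

lemma aux_eq_zero_of_hsNorm_eq_zero {n : ℕ} {M : Matrix (Fin n) (Fin n) ℂ}
    (h : hsNorm M = 0) : M = 0 := by
  have hnn : 0 ≤ ∑ i, ∑ j, ‖M i j‖ ^ 2 :=
    Finset.sum_nonneg fun i _ => Finset.sum_nonneg fun j _ => by positivity
  have h0 : ∑ i, ∑ j, ‖M i j‖ ^ 2 = 0 := by
    have := h
    unfold hsNorm at this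
    nlinarith [Real.sq_sqrt hnn, Real.sqrt_nonneg (∑ i, ∑ j, ‖M i j‖ ^ 2)]
  ext i j
  have hi : ∑ j, ‖M i j‖ ^ 2 = 0 :=
    (Finset.sum_eq_zero_iff_of_nonneg
      (fun i _ => Finset.sum_nonneg fun j _ => by positivity)).mp h0 i (Finset.mem_univ i)
  have hij : ‖M i j‖ ^ 2 = 0 :=
    (Finset.sum_eq_zero_iff_of_nonneg (fun j _ => by positivity)).mp hi j (Finset.mem_univ j)
  have habs : ‖M i j‖ = 0 := by
    nlinarith [norm_nonneg (M i j)]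
  simpa using norm_eq_zero.mp habs

lemma aux_entry_abs_le_one {d : ℕ} (U : Matrix.unitaryGroup (Fin d) ℂ) (a b : Fin d) :
    ‖(U : Matrix (Fin d) (Fin d) ℂ) a b‖ ≤ 1 := by
  have h := Matrix.UnitaryGroup.star_mul_self U
  have h1 : ∑ l, star ((U : Matrix (Fin d) (Fin d) ℂ) l b) *
      (U : Matrix (Fin d) (Fin d) ℂ) l b = 1 := by
    have := congrArg (fun M : Matrix (Fin d) (Fin d) ℂ => M b b) h
    simpa [Matrix.mul_apply, Matrix.star_apply, Matrix.one_apply] using this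
  have h2 : ∑ l, Complex.normSq ((U : Matrix (Fin d) (Fin d) ℂ) l b) = 1 := by
    have hc : ((∑ l, Complex.normSq ((U : Matrix (Fin d) (Fin d) ℂ) l b) : ℝ) : ℂ) = 1 := by
      push_cast
      rw [← h1]
      refine Finset.sum_congr rfl fun l _ => ?_
      rw [Complex.normSq_eq_conj_mul_self]
      rfl
    exact_mod_cast hc
  have h3 : Complex.normSq ((U : Matrix (Fin d) (Fin d) ℂ) a b) ≤ 1 := by
    rw [← h2]
    exact Finset.single_le_sum
      (f := fun l => Complex.normSq ((U : Matrix (Fin d) (Fin d) ℂ) l b))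
      (fun l _ => Complex.normSq_nonneg _) (Finset.mem_univ a)
  have h4 : ‖(U : Matrix (Fin d) (Fin d) ℂ) a b‖ ^ 2 ≤ 1 := by
    rw [Complex.sq_norm]; exact h3
  nlinarith [norm_nonneg ((U : Matrix (Fin d) (Fin d) ℂ) a b)]

section Group

variable {G : Type*} [Group G] [TopologicalSpace G] [IsTopologicalGroup G]
  [MeasurableSpace G] [BorelSpace G] {μ : MeasureTheory.Measure G}

lemma aux_integrable_mul_conj_entry {f : G → ℂ} (hf : MeasureTheory.Integrable f μ) {d : ℕ}
    (ξ : G →* Matrix.unitaryGroup (Fin d) ℂ)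
    (hcont : Continuous fun x => (ξ x : Matrix (Fin d) (Fin d) ℂ)) (a b : Fin d) :
    MeasureTheory.Integrable
      (fun x => f x * (starRingEnd ℂ) ((ξ x : Matrix (Fin d) (Fin d) ℂ) a b)) μ := by
  have hc : Continuous fun x => (starRingEnd ℂ) ((ξ x : Matrix (Fin d) (Fin d) ℂ) a b) :=
    continuous_star.comp (hcont.matrix_elem a b)
  have hb : ∃ C, ∀ x, ‖(starRingEnd ℂ) ((ξ x : Matrix (Fin d) (Fin d) ℂ) a b)‖ ≤ C := by
    refine ⟨1, fun x => ?_⟩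
    rw [RCLike.norm_conj]
    simpa using aux_entry_abs_le_one (ξ x) a b
  have h1 := hf.bdd_mul hc.aestronglyMeasurable (Filter.Eventually.of_forall hb.choose_spec)
  exact h1.congr (Filter.Eventually.of_forall fun x => mul_comm _ _)

lemma aux_fourierCoef_mul_left [μ.IsMulLeftInvariant]
    {f : G → ℂ} (hf : MeasureTheory.Integrable f μ) {d : ℕ}
    (ξ : G →* Matrix.unitaryGroup (Fin d) ℂ)
    (hcont : Continuous fun x => (ξ x : Matrix (Fin d) (Fin d) ℂ)) (c : G) :
    fourierCoef μ (fun x => f (c * x)) ξ =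
      fourierCoef μ f ξ * (ξ c : Matrix (Fin d) (Fin d) ℂ) := by
  ext a b
  have key : (∫ x, f (c * x) *
        (starRingEnd ℂ) ((ξ x : Matrix (Fin d) (Fin d) ℂ) b a) ∂μ)
      = ∫ x, f x * (starRingEnd ℂ) ((ξ (c⁻¹ * x) : Matrix (Fin d) (Fin d) ℂ) b a) ∂μ := by
    have h := MeasureTheory.integral_mul_left_eq_self (μ := μ)
      (fun y => f y * (starRingEnd ℂ) ((ξ (c⁻¹ * y) : Matrix (Fin d) (Fin d) ℂ) b a)) c
    simpa [inv_mul_cancel_left] using h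
  have expand : ∀ x : G, (starRingEnd ℂ) ((ξ (c⁻¹ * x) : Matrix (Fin d) (Fin d) ℂ) b a)
      = ∑ l, (ξ c : Matrix (Fin d) (Fin d) ℂ) l b *
          (starRingEnd ℂ) ((ξ x : Matrix (Fin d) (Fin d) ℂ) l a) := by
    intro x
    have hmat : (ξ (c⁻¹ * x) : Matrix (Fin d) (Fin d) ℂ)
        = star (ξ c : Matrix (Fin d) (Fin d) ℂ) * (ξ x : Matrix (Fin d) (Fin d) ℂ) := by
      rw [map_mul, map_inv]
      rfl
    rw [hmat, Matrix.mul_apply, map_sum]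
    refine Finset.sum_congr rfl fun l _ => ?_
    rw [map_mul]
    congr 1
    rw [Matrix.star_apply]
    simp
  show (∫ x, f (c * x) * (starRingEnd ℂ) ((ξ x : Matrix (Fin d) (Fin d) ℂ) b a) ∂μ)
      = (fourierCoef μ f ξ * (ξ c : Matrix (Fin d) (Fin d) ℂ)) a b
  rw [key]
  calc (∫ x, f x * (starRingEnd ℂ) ((ξ (c⁻¹ * x) : Matrix (Fin d) (Fin d) ℂ) b a) ∂μ)
      = ∫ x, ∑ l, (ξ c : Matrix (Fin d) (Fin d) ℂ) l b *
          (f x * (starRingEnd ℂ) ((ξ x : Matrix (Fin d) (Fin d) ℂ) l a)) ∂μ := by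
        congr 1
        funext x
        rw [expand x, Finset.mul_sum]
        exact Finset.sum_congr rfl fun l _ => by ring
    _ = ∑ l, ∫ x, (ξ c : Matrix (Fin d) (Fin d) ℂ) l b *
          (f x * (starRingEnd ℂ) ((ξ x : Matrix (Fin d) (Fin d) ℂ) l a)) ∂μ := by
        exact MeasureTheory.integral_finset_sum _ fun l _ =>
          ((aux_integrable_mul_conj_entry hf ξ hcont l a).const_mul _)
    _ = ∑ l, (ξ c : Matrix (Fin d) (Fin d) ℂ) l b *
          ∫ x, f x * (starRingEnd ℂ) ((ξ x : Matrix (Fin d) (Fin d) ℂ) l a) ∂μ := by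
        exact Finset.sum_congr rfl fun l _ => MeasureTheory.integral_const_mul _ _
    _ = (fourierCoef μ f ξ * (ξ c : Matrix (Fin d) (Fin d) ℂ)) a b := by
        rw [Matrix.mul_apply]
        refine Finset.sum_congr rfl fun l _ => ?_
        rw [mul_comm]
        rfl

lemma aux_fourierCoef_sub {f g : G → ℂ} (hfi : MeasureTheory.Integrable f μ)
    (hgi : MeasureTheory.Integrable g μ) {d : ℕ}
    (ξ : G →* Matrix.unitaryGroup (Fin d) ℂ)
    (hcont : Continuous fun x => (ξ x : Matrix (Fin d) (Fin d) ℂ)) :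
    fourierCoef μ (fun x => f x - g x) ξ = fourierCoef μ f ξ - fourierCoef μ g ξ := by
  ext a b
  show (∫ x, (f x - g x) * (starRingEnd ℂ) ((ξ x : Matrix (Fin d) (Fin d) ℂ) b a) ∂μ) = _
  rw [show (fourierCoef μ f ξ - fourierCoef μ g ξ) a b
      = (∫ x, f x * (starRingEnd ℂ) ((ξ x : Matrix (Fin d) (Fin d) ℂ) b a) ∂μ)
        - ∫ x, g x * (starRingEnd ℂ) ((ξ x : Matrix (Fin d) (Fin d) ℂ) b a) ∂μ from rfl]
  rw [← MeasureTheory.integral_sub (aux_integrable_mul_conj_entry hfi ξ hcont b a)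
    (aux_integrable_mul_conj_entry hgi ξ hcont b a)]
  congr 1
  funext x
  ring

lemma aux_fourierCoef_const_mul (f : G → ℂ) (c : ℂ) {d : ℕ}
    (ξ : G →* Matrix.unitaryGroup (Fin d) ℂ) :
    fourierCoef μ (fun x => c * f x) ξ = c • fourierCoef μ f ξ := by
  ext a b
  show (∫ x, (c * f x) * (starRingEnd ℂ) ((ξ x : Matrix (Fin d) (Fin d) ℂ) b a) ∂μ)
      = c * ∫ x, f x * (starRingEnd ℂ) ((ξ x : Matrix (Fin d) (Fin d) ℂ) b a) ∂μ
  rw [← MeasureTheory.integral_const_mul]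
  congr 1
  funext x
  ring

lemma aux_fourierCoef_finset_sum {ι : Type*} (t : Finset ι) {F : ι → G → ℂ}
    (hFi : ∀ i ∈ t, MeasureTheory.Integrable (F i) μ) {d : ℕ}
    (ξ : G →* Matrix.unitaryGroup (Fin d) ℂ)
    (hcont : Continuous fun x => (ξ x : Matrix (Fin d) (Fin d) ℂ)) :
    fourierCoef μ (fun x => ∑ i ∈ t, F i x) ξ = ∑ i ∈ t, fourierCoef μ (F i) ξ := by
  ext a b
  show (∫ x, (∑ i ∈ t, F i x) * (starRingEnd ℂ) ((ξ x : Matrix (Fin d) (Fin d) ℂ) b a) ∂μ) = _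
  rw [show (∑ i ∈ t, fourierCoef μ (F i) ξ) a b
      = ∑ i ∈ t, ∫ x, F i x * (starRingEnd ℂ) ((ξ x : Matrix (Fin d) (Fin d) ℂ) b a) ∂μ by
    rw [Matrix.sum_apply]; rfl]
  rw [← MeasureTheory.integral_finset_sum t
    (fun i hi => aux_integrable_mul_conj_entry (hFi i hi) ξ hcont b a)]
  congr 1
  funext x
  rw [Finset.sum_mul]

end Group

lemma aux_sum_rep_mul_right {G : Type*} [Group G] {H K : Subgroup G} (hHK : H ≤ K)
    [Fintype (Quotient (QuotientGroup.rightRel (H.subgroupOf K)))]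
    {d : ℕ} (ρ : G →* Matrix.unitaryGroup (Fin d) ℂ) (hρ : ∀ x ∈ H, ρ x = 1)
    {h : G} (hh : h ∈ K) :
    (∑ x : Quotient (QuotientGroup.rightRel (H.subgroupOf K)),
        (ρ (((Quotient.out x : ↥K) : G) * h) : Matrix (Fin d) (Fin d) ℂ)) =
      ∑ x : Quotient (QuotientGroup.rightRel (H.subgroupOf K)),
        (ρ ((Quotient.out x : ↥K) : G) : Matrix (Fin d) (Fin d) ℂ) := by
  classical
  have hconst : ∀ a b : ↥K, QuotientGroup.rightRel (H.subgroupOf K) a b →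
      (ρ (a : G) : Matrix (Fin d) (Fin d) ℂ) = (ρ (b : G) : Matrix (Fin d) (Fin d) ℂ) := by
    intro a b hab
    have hab' : b * a⁻¹ ∈ H.subgroupOf K := QuotientGroup.rightRel_apply.mp hab
    have hmem : ((b * a⁻¹ : ↥K) : G) ∈ H := Subgroup.mem_subgroupOf.mp hab'
    have h1 : ρ (b : G) = ρ (((b * a⁻¹ : ↥K) : G) * (a : G)) := by
      congr 1
      push_cast
      group
    rw [h1, map_mul, hρ _ hmem, one_mul]
  let φQ : Quotient (QuotientGroup.rightRel (H.subgroupOf K)) → Matrix (Fin d) (Fin d) ℂ :=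
    Quotient.lift (fun u : ↥K => (ρ (u : G) : Matrix (Fin d) (Fin d) ℂ)) hconst
  let h' : ↥K := ⟨h, hh⟩
  have wd : ∀ a b : ↥K, QuotientGroup.rightRel (H.subgroupOf K) a b →
      QuotientGroup.rightRel (H.subgroupOf K) (a * h') (b * h') := by
    intro a b hab
    rw [QuotientGroup.rightRel_apply] at hab ⊢
    simpa [mul_inv_rev, mul_assoc] using hab
  have wd' : ∀ a b : ↥K, QuotientGroup.rightRel (H.subgroupOf K) a b →
      QuotientGroup.rightRel (H.subgroupOf K) (a * h'⁻¹) (b * h'⁻¹) := by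
    intro a b hab
    rw [QuotientGroup.rightRel_apply] at hab ⊢
    simpa [mul_inv_rev, mul_assoc] using hab
  let e : Quotient (QuotientGroup.rightRel (H.subgroupOf K)) ≃
      Quotient (QuotientGroup.rightRel (H.subgroupOf K)) :=
    { toFun := Quotient.map (· * h') wd
      invFun := Quotient.map (· * h'⁻¹) wd'
      left_inv := by
        intro x
        induction x using Quotient.inductionOn with
        | _ u => simp [Quotient.map_mk, mul_assoc]
      right_inv := by
        intro x
        induction x using Quotient.inductionOn with
        | _ u => simp [Quotient.map_mk, mul_assoc] }
  have hφe : ∀ x : Quotient (QuotientGroup.rightRel (H.subgroupOf K)), φQ (e x)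
      = (ρ (((Quotient.out x : ↥K) : G) * h) : Matrix (Fin d) (Fin d) ℂ) := by
    intro x
    conv_lhs => rw [← Quotient.out_eq x]
    show φQ (Quotient.map (· * h') wd (Quotient.mk _ (Quotient.out x))) = _
    rw [Quotient.map_mk]
    rfl
  have hφ : ∀ x : Quotient (QuotientGroup.rightRel (H.subgroupOf K)), φQ x
      = (ρ ((Quotient.out x : ↥K) : G) : Matrix (Fin d) (Fin d) ℂ) := by
    intro x
    conv_lhs => rw [← Quotient.out_eq x]
    rfl
  calc (∑ x : Quotient (QuotientGroup.rightRel (H.subgroupOf K)),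
        (ρ (((Quotient.out x : ↥K) : G) * h) : Matrix (Fin d) (Fin d) ℂ))
      = ∑ x : Quotient (QuotientGroup.rightRel (H.subgroupOf K)), φQ (e x) :=
        Finset.sum_congr rfl fun x _ => (hφe x).symm
    _ = ∑ x : Quotient (QuotientGroup.rightRel (H.subgroupOf K)), φQ x := e.sum_comp φQ
    _ = ∑ x : Quotient (QuotientGroup.rightRel (H.subgroupOf K)),
          (ρ ((Quotient.out x : ↥K) : G) : Matrix (Fin d) (Fin d) ℂ) :=
        Finset.sum_congr rfl fun x _ => hφ x

end AuxiliaryLemmas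

open scoped ENNReal NNReal


/-- **First Titchmarsh theorem: tail estimate.** Let `G` be a compact Vilenkin group
satisfying Condition (A) (hypothesis `hA`), with the Hausdorff–Young inequality `hHY`
available on its dual. If `f ∈ Lip_𝒢(α;p)` with `1 < p ≤ 2`, `1/p + 1/q = 1`,
`0 < α ≤ 1`, then `(∑_{⟨ξ⟩ > |G/G_k|} d_ξ^{q(2/q-1/2)} ‖f̂(ξ)‖_HS^q)^{1/q} = O(|G/G_k|^{-α})`
as `k → ∞`. -/
theorem first_titchmarsh_tail_estimate
    {G : Type*} [Group G] [TopologicalSpace G] [IsTopologicalGroup G] [CompactSpace G]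
    [TotallyDisconnectedSpace G] [MeasurableSpace G] [BorelSpace G]
    (V : VilenkinData G) (μ : Measure G) [μ.IsHaarMeasure] [IsProbabilityMeasure μ]
    (D : DualData G V μ)
    (p q : ℝ) (hp₁ : 1 < p) (hp₂ : p ≤ 2) (hpq : 1 / p + 1 / q = 1)
    (α : ℝ) (hα₀ : 0 < α) (hα₁ : α ≤ 1)
    -- the Hausdorff–Young inequality on `Ĝ`
    (hHY : ∀ g : G → ℂ, MemLp g (ENNReal.ofReal p) μ →
      Summable (fun i => (D.dim i : ℝ) ^ (q * (2 / q - 1 / 2)) *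
        hsNorm (fourierCoef μ g (D.rep i)) ^ q) ∧
      (∑' i, (D.dim i : ℝ) ^ (q * (2 / q - 1 / 2)) * hsNorm (fourierCoef μ g (D.rep i)) ^ q) ≤
        ((eLpNorm g (ENNReal.ofReal p) μ).toReal) ^ q)
    -- Condition (A)
    (hA : ∃ (nn : ℕ) (C : ℝ → ℝ), (∀ q', 1 ≤ q' → 0 < C q') ∧ ∀ k : ℕ, ∃ h : Fin nn → G,
      (∀ i, h i ∈ V.seq k ∧ h i ∉ V.seq (k + 1)) ∧
      ∀ q', 1 ≤ q' → ∀ j : D.ι, k < D.lvl j →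
        ∀ A : Matrix (Fin (D.dim j)) (Fin (D.dim j)) ℂ,
          ((V.seq k).index : ℝ) ^ q' * ((V.seq (D.lvl j)).index : ℝ) ^ (-q') *
              hsNorm A ^ q' ≤
            C q' * ∑ i : Fin nn,
              hsNorm (A * (((D.rep j) (h i) : Matrix (Fin (D.dim j)) (Fin (D.dim j)) ℂ) - 1))
                ^ q')
    (f : G → ℂ) (hf : MemLp f (ENNReal.ofReal p) μ)
    -- `f ∈ Lip_𝒢(α;p)`
    (hLip : ∃ C > (0 : ℝ), ∀ k : ℕ, ∀ h ∈ V.seq k,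
      eLpNorm (fun x => f (h * x) - f x) (ENNReal.ofReal p) μ ≤
        ENNReal.ofReal (C * ((V.seq k).index : ℝ) ^ (-α))) :
    ∃ C > (0 : ℝ), ∀ k : ℕ,
      Summable (fun i : {i // k < D.lvl i} =>
        (D.dim i.1 : ℝ) ^ (q * (2 / q - 1 / 2)) * hsNorm (fourierCoef μ f (D.rep i.1)) ^ q) ∧
      (∑' i : {i // k < D.lvl i},
          (D.dim i.1 : ℝ) ^ (q * (2 / q - 1 / 2)) * hsNorm (fourierCoef μ f (D.rep i.1)) ^ q)
          ^ (1 / q) ≤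
        C * ((V.seq k).index : ℝ) ^ (-α) := by
  classical
  obtain ⟨CL, hCL0, hLipB⟩ := hLip
  obtain ⟨nn, CA, hCApos, hACond⟩ := hA
  have hp0 : (0:ℝ) < p := lt_trans one_pos hp₁
  have h1p : 1 / p < 1 := by rw [div_lt_one hp0]; exact hp₁
  have hq_inv_pos : 0 < 1 / q := by linarith
  have hq0 : (0:ℝ) < q := by
    rcases lt_trichotomy q 0 with h | h | h
    · exfalso
      have : 1 / q < 0 := div_neg_of_pos_of_neg one_pos h
      linarith
    · exfalso; rw [h] at hq_inv_pos; simp at hq_inv_pos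
    · exact h
  have hqne : q ≠ 0 := ne_of_gt hq0
  have hq1 : (1:ℝ) ≤ q := by
    have hppos : 0 < 1 / p := by positivity
    have h1 : 1 / q ≤ 1 := by linarith
    exact (div_le_one hq0).mp h1
  have hp1' : (1 : ℝ≥0∞) ≤ ENNReal.ofReal p := ENNReal.one_le_ofReal.mpr hp₁.le
  have hfInt : Integrable f μ := hf.integrable hp1'
  have hterm_nonneg : ∀ (u : G → ℂ) (i : D.ι),
      0 ≤ (D.dim i : ℝ) ^ (q * (2 / q - 1 / 2)) * hsNorm (fourierCoef μ u (D.rep i)) ^ q :=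
    fun u i => mul_nonneg (Real.rpow_nonneg (Nat.cast_nonneg _) _)
      (Real.rpow_nonneg (aux_hsNorm_nonneg _) _)
  refine ⟨CL, hCL0, fun k => ?_⟩
  have hNk_pos : (0:ℝ) < ((V.seq k).index : ℝ) :=
    Nat.cast_pos.mpr (Nat.pos_of_ne_zero (V.index_ne_zero k))
  set B : ℝ := CL * ((V.seq k).index : ℝ) ^ (-α) with hBdef
  have hB0 : 0 < B := mul_pos hCL0 (Real.rpow_pos_of_pos hNk_pos _)
  have hSummf := (hHY f hf).1
  have hSummSub : Summable (fun i : {i // k < D.lvl i} =>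
      (D.dim i.1 : ℝ) ^ (q * (2 / q - 1 / 2)) * hsNorm (fourierCoef μ f (D.rep i.1)) ^ q) :=
    hSummf.subtype {i | k < D.lvl i}
  refine ⟨hSummSub, ?_⟩
  have hFin : ∀ F : Finset {i // k < D.lvl i},
      (∑ i ∈ F, (D.dim i.1 : ℝ) ^ (q * (2 / q - 1 / 2)) *
        hsNorm (fourierCoef μ f (D.rep i.1)) ^ q) ≤ B ^ q := by
    intro F
    rcases F.eq_empty_or_nonempty with hFe | hFne
    · rw [hFe, Finset.sum_empty]
      exact Real.rpow_nonneg hB0.le q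
    obtain ⟨i₀, hi₀⟩ := hFne
    set Mx := F.sup (fun i => D.lvl i.1) with hMx
    have hkM : k ≤ Mx := le_trans (le_of_lt i₀.2) (Finset.le_sup (f := fun i => D.lvl i.1) hi₀)
    have hHK : V.seq Mx ≤ V.seq k := V.strictAnti.antitone hkM
    have hidx : ((V.seq Mx).subgroupOf (V.seq k)).index ≠ 0 := by
      intro h0
      have hmul := Subgroup.relIndex_mul_index hHK
      have hrel : (V.seq Mx).relIndex (V.seq k) = 0 := h0
      rw [hrel, zero_mul] at hmul
      exact V.index_ne_zero Mx hmul.symm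
    haveI hfin1 : Finite ((↥(V.seq k)) ⧸ ((V.seq Mx).subgroupOf (V.seq k))) :=
      Nat.finite_of_card_ne_zero hidx
    haveI hfin2 : Finite (Quotient (QuotientGroup.rightRel ((V.seq Mx).subgroupOf (V.seq k)))) :=
      Finite.of_equiv _
        (QuotientGroup.quotientRightRelEquivQuotientLeftRel
          ((V.seq Mx).subgroupOf (V.seq k))).symm
    haveI : Fintype (Quotient (QuotientGroup.rightRel ((V.seq Mx).subgroupOf (V.seq k)))) :=
      Fintype.ofFinite _
    haveI : Nonempty (Quotient (QuotientGroup.rightRel ((V.seq Mx).subgroupOf (V.seq k)))) :=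
      ⟨Quotient.mk _ 1⟩
    set n := Fintype.card (Quotient (QuotientGroup.rightRel
      ((V.seq Mx).subgroupOf (V.seq k)))) with hn
    have hn0 : 0 < n := Fintype.card_pos
    have hcn : (n : ℂ) ≠ 0 := Nat.cast_ne_zero.mpr hn0.ne'
    set r : Quotient (QuotientGroup.rightRel ((V.seq Mx).subgroupOf (V.seq k))) → G :=
      fun x => ((Quotient.out x : ↥(V.seq k)) : G) with hr
    have hrK : ∀ x, r x ∈ V.seq k := fun x => (Quotient.out x).2
    set g : G → ℂ := fun x => (n : ℂ)⁻¹ *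
      ∑ y : Quotient (QuotientGroup.rightRel ((V.seq Mx).subgroupOf (V.seq k))),
        (f x - f (r y * x)) with hgdef
    have htrans : ∀ u : G, MemLp (fun x => f (u * x)) (ENNReal.ofReal p) μ := fun u =>
      hf.comp_measurePreserving (measurePreserving_mul_left μ u)
    have hterm_mem : ∀ y, MemLp (fun x => f x - f (r y * x)) (ENNReal.ofReal p) μ :=
      fun y => hf.sub (htrans (r y))
    have hg_mem : MemLp g (ENNReal.ofReal p) μ :=
      (memLp_finset_sum Finset.univ (fun y _ => hterm_mem y)).const_mul _
    have hbound_each : ∀ y, eLpNorm (fun x => f x - f (r y * x)) (ENNReal.ofReal p) μ ≤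
        ENNReal.ofReal B := by
      intro y
      have hneg : (fun x => f x - f (r y * x)) = -(fun x => f (r y * x) - f x) := by
        funext x; simp
      rw [hneg, eLpNorm_neg]
      exact hLipB k (r y) (hrK y)
    have hg_norm : eLpNorm g (ENNReal.ofReal p) μ ≤ ENNReal.ofReal B := by
      have h1 : g = ((n : ℂ)⁻¹ : ℂ) • (fun x =>
          ∑ y : Quotient (QuotientGroup.rightRel ((V.seq Mx).subgroupOf (V.seq k))),
            (f x - f (r y * x))) := by
        funext x; simp [hgdef, smul_eq_mul]
      rw [h1, eLpNorm_const_smul]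
      have h3 : (fun x => ∑ y : Quotient (QuotientGroup.rightRel
          ((V.seq Mx).subgroupOf (V.seq k))), (f x - f (r y * x)))
          = ∑ y : Quotient (QuotientGroup.rightRel ((V.seq Mx).subgroupOf (V.seq k))),
            (fun x => f x - f (r y * x)) := by
        funext x; simp
      have h2 : eLpNorm (fun x => ∑ y : Quotient (QuotientGroup.rightRel
          ((V.seq Mx).subgroupOf (V.seq k))), (f x - f (r y * x))) (ENNReal.ofReal p) μ
          ≤ (n : ℝ≥0∞) * ENNReal.ofReal B := by
        rw [h3]
        refine le_trans (eLpNorm_sum_le (fun y _ => (hterm_mem y).aestronglyMeasurable) hp1') ?_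
        refine le_trans (Finset.sum_le_sum fun y _ => hbound_each y) ?_
        rw [Finset.sum_const, Finset.card_univ, ← hn]
        simp [nsmul_eq_mul]
      refine le_trans (mul_le_mul_right h2 _) ?_
      have hnorm : ((‖((n : ℂ)⁻¹ : ℂ)‖₊ : ℝ≥0∞)) = ((n : ℝ≥0∞))⁻¹ := by
        rw [nnnorm_inv]
        rw [ENNReal.coe_inv (by simp [hn0.ne'])]
        congr 1
        simp
      rw [enorm_eq_nnnorm, hnorm, ← mul_assoc, ENNReal.inv_mul_cancel (by exact_mod_cast hcn)
        (ENNReal.natCast_ne_top n), one_mul]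
    have hS0 : ∀ i1 : {i // k < D.lvl i}, i1 ∈ F →
        (∑ y : Quotient (QuotientGroup.rightRel ((V.seq Mx).subgroupOf (V.seq k))),
          ((D.rep i1.1) (r y) : Matrix (Fin (D.dim i1.1)) (Fin (D.dim i1.1)) ℂ)) = 0 := by
      intro i1 hmem
      set S := ∑ y : Quotient (QuotientGroup.rightRel ((V.seq Mx).subgroupOf (V.seq k))),
        ((D.rep i1.1) (r y) : Matrix (Fin (D.dim i1.1)) (Fin (D.dim i1.1)) ℂ) with hSdef
      have hlvlM : D.lvl i1.1 ≤ Mx := Finset.le_sup (f := fun i => D.lvl i.1) hmem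
      have htriv : ∀ x ∈ V.seq Mx, D.rep i1.1 x = 1 := fun x hx =>
        D.lvl_triv i1.1 x (V.strictAnti.antitone hlvlM hx)
      have hshift : ∀ h ∈ V.seq k,
          S * ((D.rep i1.1) h : Matrix (Fin (D.dim i1.1)) (Fin (D.dim i1.1)) ℂ) = S := by
        intro h hh
        rw [hSdef, Finset.sum_mul]
        calc (∑ y : Quotient (QuotientGroup.rightRel ((V.seq Mx).subgroupOf (V.seq k))),
              ((D.rep i1.1) (r y) : Matrix (Fin (D.dim i1.1)) (Fin (D.dim i1.1)) ℂ) *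
                ((D.rep i1.1) h : Matrix (Fin (D.dim i1.1)) (Fin (D.dim i1.1)) ℂ))
            = ∑ y : Quotient (QuotientGroup.rightRel ((V.seq Mx).subgroupOf (V.seq k))),
              ((D.rep i1.1) (r y * h) : Matrix (Fin (D.dim i1.1)) (Fin (D.dim i1.1)) ℂ) := by
              refine Finset.sum_congr rfl fun y _ => ?_
              rw [map_mul]; rfl
          _ = S := by rw [hSdef]; exact aux_sum_rep_mul_right hHK _ htriv hh
      obtain ⟨hv, hvmem, hAineq⟩ := hACond k
      have h0 := hAineq q hq1 i1.1 i1.2 S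
      have hR : (∑ i : Fin nn, hsNorm (S *
          (((D.rep i1.1) (hv i) : Matrix (Fin (D.dim i1.1)) (Fin (D.dim i1.1)) ℂ) - 1)) ^ q)
          = 0 := by
        refine Finset.sum_eq_zero fun i _ => ?_
        rw [mul_sub, mul_one, hshift _ (hvmem i).1, sub_self, aux_hsNorm_zero,
          Real.zero_rpow hqne]
      rw [hR, mul_zero] at h0
      have hSn : hsNorm S = 0 := by
        by_contra hne
        have hpos : 0 < hsNorm S := lt_of_le_of_ne (aux_hsNorm_nonneg S) (Ne.symm hne)
        have hpos1 : (0:ℝ) < ((V.seq k).index : ℝ) ^ q := Real.rpow_pos_of_pos hNk_pos q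
        have hpos2 : (0:ℝ) < ((V.seq (D.lvl i1.1)).index : ℝ) ^ (-q) :=
          Real.rpow_pos_of_pos
            (Nat.cast_pos.mpr (Nat.pos_of_ne_zero (V.index_ne_zero _))) _
        have := mul_pos (mul_pos hpos1 hpos2) (Real.rpow_pos_of_pos hpos q)
        linarith
      exact aux_eq_zero_of_hsNorm_eq_zero hSn
    have hghat : ∀ i1 : {i // k < D.lvl i}, i1 ∈ F →
        fourierCoef μ g (D.rep i1.1) = fourierCoef μ f (D.rep i1.1) := by
      intro i1 hmem
      have hint_tr : ∀ y, Integrable (fun x => f (r y * x)) μ :=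
        fun y => (htrans (r y)).integrable hp1'
      have hcont := D.rep_continuous i1.1
      have h1 : fourierCoef μ g (D.rep i1.1)
          = ((n:ℂ)⁻¹) • ∑ y : Quotient (QuotientGroup.rightRel
              ((V.seq Mx).subgroupOf (V.seq k))),
            fourierCoef μ (fun x => f x - f (r y * x)) (D.rep i1.1) := by
        rw [hgdef]
        rw [aux_fourierCoef_const_mul (fun x => ∑ y : Quotient (QuotientGroup.rightRel
          ((V.seq Mx).subgroupOf (V.seq k))), (f x - f (r y * x))) ((n:ℂ)⁻¹) (D.rep i1.1)]
        congr 1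
        exact aux_fourierCoef_finset_sum Finset.univ
          (fun y _ => hfInt.sub (hint_tr y)) _ hcont
      rw [h1]
      have h2 : ∀ y, fourierCoef μ (fun x => f x - f (r y * x)) (D.rep i1.1)
          = fourierCoef μ f (D.rep i1.1)
            - fourierCoef μ f (D.rep i1.1) *
              ((D.rep i1.1) (r y) : Matrix (Fin (D.dim i1.1)) (Fin (D.dim i1.1)) ℂ) := by
        intro y
        rw [aux_fourierCoef_sub hfInt (hint_tr y) _ hcont,
          aux_fourierCoef_mul_left hfInt _ hcont]
      rw [Finset.sum_congr rfl (fun y _ => h2 y)]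
      rw [Finset.sum_sub_distrib, Finset.sum_const, Finset.card_univ, ← hn, ← Finset.mul_sum]
      rw [hS0 i1 hmem, mul_zero, sub_zero]
      rw [← Nat.cast_smul_eq_nsmul ℂ, smul_smul, inv_mul_cancel₀ hcn, one_smul]
    obtain ⟨hsum_g, hbound_g⟩ := hHY g hg_mem
    have step1 : (∑ i ∈ F, (D.dim i.1 : ℝ) ^ (q * (2 / q - 1 / 2)) *
        hsNorm (fourierCoef μ f (D.rep i.1)) ^ q)
        = ∑ i ∈ F, (D.dim i.1 : ℝ) ^ (q * (2 / q - 1 / 2)) *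
          hsNorm (fourierCoef μ g (D.rep i.1)) ^ q :=
      Finset.sum_congr rfl fun i hi => by rw [hghat i hi]
    rw [step1]
    have step2 : (∑ i ∈ F, (D.dim i.1 : ℝ) ^ (q * (2 / q - 1 / 2)) *
        hsNorm (fourierCoef μ g (D.rep i.1)) ^ q)
        ≤ ∑' j, (D.dim j : ℝ) ^ (q * (2 / q - 1 / 2)) *
            hsNorm (fourierCoef μ g (D.rep j)) ^ q := by
      have hmap : (∑ i ∈ F, (D.dim i.1 : ℝ) ^ (q * (2 / q - 1 / 2)) *
          hsNorm (fourierCoef μ g (D.rep i.1)) ^ q)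
          = ∑ j ∈ F.map ⟨Subtype.val, Subtype.val_injective⟩,
            (D.dim j : ℝ) ^ (q * (2 / q - 1 / 2)) * hsNorm (fourierCoef μ g (D.rep j)) ^ q := by
        rw [Finset.sum_map]
        rfl
      rw [hmap]
      exact Summable.sum_le_tsum _ (fun j _ => hterm_nonneg g j) hsum_g
    have step3 : ((eLpNorm g (ENNReal.ofReal p) μ).toReal) ^ q ≤ B ^ q := by
      refine Real.rpow_le_rpow ENNReal.toReal_nonneg ?_ hq0.le
      exact ENNReal.toReal_le_of_le_ofReal hB0.le hg_norm
    linarith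
  have htsum_le : (∑' i : {i // k < D.lvl i},
      (D.dim i.1 : ℝ) ^ (q * (2 / q - 1 / 2)) *
        hsNorm (fourierCoef μ f (D.rep i.1)) ^ q) ≤ B ^ q :=
    Summable.tsum_le_of_sum_le hSummSub hFin
  have htsum_nonneg : 0 ≤ (∑' i : {i // k < D.lvl i},
      (D.dim i.1 : ℝ) ^ (q * (2 / q - 1 / 2)) *
        hsNorm (fourierCoef μ f (D.rep i.1)) ^ q) :=
    tsum_nonneg fun i => hterm_nonneg f i.1
  calc (∑' i : {i // k < D.lvl i},
      (D.dim i.1 : ℝ) ^ (q * (2 / q - 1 / 2)) *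
        hsNorm (fourierCoef μ f (D.rep i.1)) ^ q) ^ (1 / q)
      ≤ (B ^ q) ^ (1 / q) := Real.rpow_le_rpow htsum_nonneg htsum_le (by positivity)
    _ = B := by rw [← Real.rpow_mul hB0.le, mul_one_div_cancel hqne, Real.rpow_one]

end
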